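/- Let d ≥ 1 and let P̃ and Q̃ be real polynomials. There exist complex polynomials P, Q with deg P ≤ d, deg Q ≤ d−1, P of parity d mod 2, Q of parity (d−1) mod 2, and |P(x)|² + (1−x²)·|Q(x)|² = 1 for all x ∈ [-1,1], such that the real part of P equals P̃ and the real part of Q equals Q̃ (coefficientwise), if and only if deg P̃ ≤ d, deg Q̃ ≤ d−1, P̃ has parity d mod 2, Q̃ has parity (d−1) mod 2, and P̃(x)² + (1−x²)·Q̃(x)² ≤ 1 for all x ∈ [-1,1]. -/

import Mathlib

open Matrix Polynomial

/-- The single-qubit Z-rotation `Z(φ) = diag(e^{iφ}, e^{-iφ})`. -/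
noncomputable def Zrot (φ : ℝ) : Matrix (Fin 2) (Fin 2) ℂ :=
  !![Complex.exp (Complex.I * (φ : ℂ)), 0; 0, Complex.exp (-(Complex.I * (φ : ℂ)))]

/-- The QSP signal oracle `W(x)`, with diagonal entries `x` and off-diagonal
entries `i·√(1-x²)`. -/
noncomputable def Wosc (x : ℝ) : Matrix (Fin 2) (Fin 2) ℂ :=
  !![(x : ℂ), Complex.I * (Real.sqrt (1 - x ^ 2) : ℂ);
     Complex.I * (Real.sqrt (1 - x ^ 2) : ℂ), (x : ℂ)]

/-- The QSP unitary `U_Φ(x) = Z(φ₀)·W(x)·Z(φ₁)·W(x)·Z(φ₂)⋯W(x)·Z(φ_d)`. -/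
noncomputable def qspU {d : ℕ} (Φ : Fin (d + 1) → ℝ) (x : ℝ) :
    Matrix (Fin 2) (Fin 2) ℂ :=
  Zrot (Φ 0) * (List.ofFn fun k : Fin d => Wosc x * Zrot (Φ k.succ)).prod

/-- The nested QSP unitary `(Φ1 ∘ Φ0)(x)`: the QSP circuit of `Φ1` with each
oracle `W(x)` replaced by `U_{Φ0}(x)`. -/
noncomputable def nestedU {n m : ℕ} (Φ1 : Fin (m + 1) → ℝ) (Φ0 : Fin (n + 1) → ℝ)
    (x : ℝ) : Matrix (Fin 2) (Fin 2) ℂ :=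
  Zrot (Φ1 0) * (List.ofFn fun k : Fin m => qspU Φ0 x * Zrot (Φ1 k.succ)).prod

/-- A phase list `Φ = (φ_0, …, φ_d)` is antisymmetric if `φ_k = -φ_{d-k}` for all `k`. -/
def Antisym {d : ℕ} (Φ : Fin (d + 1) → ℝ) : Prop := ∀ k, Φ (Fin.rev k) = -Φ k

/-- A polynomial has parity `m mod 2` if only monomials of degree congruent to `m`
modulo 2 have nonzero coefficients. -/
def HasParity {R : Type*} [Semiring R] (m : ℕ) (P : Polynomial R) : Prop :=
  ∀ k, k % 2 ≠ m % 2 → P.coeff k = 0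

section ParityLemmas
variable {R : Type*} [CommRing R] {a b : ℕ} {P Q : Polynomial R}

lemma hp_congr (h : a % 2 = b % 2) (hP : HasParity a P) : HasParity b P :=
  fun k hk => hP k (by omega)

lemma hp_zero : HasParity a (0 : Polynomial R) := fun k _ => rfl

lemma hp_C (c : R) : HasParity 0 (C c : Polynomial R) := by
  intro k hk
  rw [coeff_C, if_neg]; omega

lemma hp_X : HasParity 1 (X : Polynomial R) := by
  intro k hk
  rw [coeff_X, if_neg]; omega

lemma hp_add (hP : HasParity a P) (hQ : HasParity a Q) : HasParity a (P + Q) := by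
  intro k hk; rw [coeff_add, hP k hk, hQ k hk, add_zero]

lemma hp_neg (hP : HasParity a P) : HasParity a (-P) := by
  intro k hk; rw [coeff_neg, hP k hk, neg_zero]

lemma hp_sub (hP : HasParity a P) (hQ : HasParity a Q) : HasParity a (P - Q) := by
  rw [sub_eq_add_neg]; exact hp_add hP (hp_neg hQ)

lemma hp_mul (hP : HasParity a P) (hQ : HasParity b Q) : HasParity (a + b) (P * Q) := by
  intro k hk
  rw [coeff_mul]
  apply Finset.sum_eq_zero
  rintro ⟨i, j⟩ hij
  rw [Finset.HasAntidiagonal.mem_antidiagonal] at hij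
  simp only at *
  by_cases hi : i % 2 = a % 2
  · have : j % 2 ≠ b % 2 := by omega
    rw [hQ j this, mul_zero]
  · rw [hP i hi, zero_mul]

lemma hp_one : HasParity 0 (1 : Polynomial R) := hp_C 1

lemma hp_one_sub_X_sq : HasParity 0 ((1 : Polynomial R) - X^2) := by
  apply hp_sub hp_one
  have := hp_mul (hp_X (R := R)) (hp_X (R := R))
  rw [← sq] at this
  exact hp_congr rfl this
end ParityLemmas

/-- A "good pair" decomposition: `R = A² + (1-X²)B²` with degree and parity constraints. -/
def GoodPair (n : ℕ) (Rp : Polynomial ℝ) : Prop :=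
  ∃ A B : Polynomial ℝ, A.degree ≤ (n : WithBot ℕ) ∧ B.degree + 1 ≤ (n : WithBot ℕ) ∧
    HasParity n A ∧ HasParity (n + 1) B ∧ A ^ 2 + (1 - X ^ 2) * B ^ 2 = Rp

lemma goodPair_zero (n : ℕ) : GoodPair n 0 :=
  ⟨0, 0, by simp, by simp, hp_zero, hp_zero, by simp⟩

lemma goodPair_mul {n m : ℕ} {Rp Sp : Polynomial ℝ} (h1 : GoodPair n Rp) (h2 : GoodPair m Sp) :
    GoodPair (n + m) (Rp * Sp) := by
  obtain ⟨A, B, hA, hB, pA, pB, hval⟩ := h1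
  obtain ⟨C', D, hC, hD, pC, pD, hval'⟩ := h2
  refine ⟨A * C' - (1 - X ^ 2) * (B * D), A * D + B * C', ?_, ?_, ?_, ?_, ?_⟩
  · apply le_trans (degree_sub_le _ _)
    apply max_le
    · exact le_trans (degree_mul_le _ _) (by push_cast; exact add_le_add hA hC)
    · calc ((1 - X ^ 2) * (B * D)).degree
          ≤ (1 - X^2 : Polynomial ℝ).degree + (B * D).degree := degree_mul_le _ _
        _ ≤ 2 + (B.degree + D.degree) :=
            add_le_add (by compute_degree) (degree_mul_le _ _)
        _ = (B.degree + 1) + (D.degree + 1) := by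
            have h2 : (2:WithBot ℕ) = 1 + 1 := rfl
            rw [h2]; abel
        _ ≤ (n : WithBot ℕ) + m := add_le_add hB hD
        _ = ((n + m : ℕ) : WithBot ℕ) := by push_cast; rfl
  · calc (A * D + B * C').degree + 1
        ≤ max (A.degree + D.degree) (B.degree + C'.degree) + 1 := by
          exact add_le_add_left (le_trans (degree_add_le _ _)
            (max_le_max (degree_mul_le _ _) (degree_mul_le _ _))) 1
      _ = max (A.degree + D.degree + 1) (B.degree + C'.degree + 1) := (max_add_add_right _ _ _).symm
      _ ≤ ((n + m : ℕ) : WithBot ℕ) := by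
          apply max_le
          · calc A.degree + D.degree + 1 = A.degree + (D.degree + 1) := by abel
              _ ≤ (n : WithBot ℕ) + m := add_le_add hA hD
              _ = ((n + m : ℕ) : WithBot ℕ) := by push_cast; rfl
          · calc B.degree + C'.degree + 1 = (B.degree + 1) + C'.degree := by abel
              _ ≤ (n : WithBot ℕ) + m := add_le_add hB hC
              _ = ((n + m : ℕ) : WithBot ℕ) := by push_cast; rfl
  · apply hp_sub
    · exact hp_mul pA pC
    · have := hp_mul hp_one_sub_X_sq (hp_mul pB pD)
      exact hp_congr (by omega) this
  · apply hp_add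
    · exact hp_congr (by omega) (hp_mul pA pD)
    · exact hp_congr (by omega) (hp_mul pB pC)
  · rw [← hval, ← hval']; ring

lemma hp_X_sq : HasParity 2 (X^2 : Polynomial ℝ) := by
  have := hp_mul (hp_X (R := ℝ)) (hp_X (R := ℝ))
  rwa [← sq] at this

lemma goodPair_unit : GoodPair 1 (1 : Polynomial ℝ) := by
  refine ⟨X, 1, degree_X_le, ?_, hp_X, hp_congr rfl (hp_one), by ring⟩
  · rw [degree_one]; exact le_refl _

lemma goodPair_le {n m : ℕ} {Rp : Polynomial ℝ} (h : GoodPair n Rp) (hnm : n ≤ m) :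
    GoodPair m Rp := by
  induction m with
  | zero => simpa [Nat.le_zero.mp hnm] using h
  | succ m ih =>
    rcases Nat.lt_or_ge n (m+1) with h' | h'
    · have := goodPair_mul (ih (by omega)) goodPair_unit
      rwa [mul_one] at this
    · have : n = m + 1 := by omega
      subst this; exact h

lemma goodPair_smul {n : ℕ} {Rp : Polynomial ℝ} (h : GoodPair n Rp) {c : ℝ} (hc : 0 ≤ c) :
    GoodPair n (C c * Rp) := by
  obtain ⟨A, B, hA, hB, pA, pB, hval⟩ := h
  refine ⟨C (Real.sqrt c) * A, C (Real.sqrt c) * B, ?_, ?_, ?_, ?_, ?_⟩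
  · exact le_trans (degree_mul_le _ _) (by simpa using add_le_add (degree_C_le) hA)
  · have : (C (Real.sqrt c) * B).degree ≤ B.degree := by
      simpa using le_trans (degree_mul_le _ _) (add_le_add (degree_C_le) (le_refl B.degree))
    exact le_trans (add_le_add_left this 1) hB
  · exact hp_congr (by omega) (hp_mul (hp_C _) pA)
  · exact hp_congr (by omega) (hp_mul (hp_C _) pB)
  · rw [← hval]
    apply Polynomial.funext; intro x
    simp only [eval_add, eval_mul, eval_pow, eval_sub, eval_one, eval_C, eval_X]
    rw [mul_pow, mul_pow, Real.sq_sqrt hc]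
    ring

lemma goodPair_Xsq : GoodPair 1 (X^2 : Polynomial ℝ) :=
  ⟨X, 0, degree_X_le, by simp, hp_X, hp_zero, by ring⟩

lemma goodPair_uSubXsq {u : ℝ} (hu : 1 ≤ u) : GoodPair 1 (C u - X^2) := by
  refine ⟨C (Real.sqrt (u-1)) * X, C (Real.sqrt u), ?_, ?_, ?_, ?_, ?_⟩
  · exact le_trans (degree_mul_le _ _)
      (by simpa using add_le_add (degree_C_le : (C (Real.sqrt (u-1)) : Polynomial ℝ).degree ≤ 0) (degree_X_le : (X : Polynomial ℝ).degree ≤ 1))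
  · simpa using add_le_add_left (degree_C_le : (C (Real.sqrt u) : Polynomial ℝ).degree ≤ 0) 1
  · exact hp_congr (by omega) (hp_mul (hp_C _) hp_X)
  · exact hp_congr (by omega) (hp_C _)
  · apply Polynomial.funext; intro x
    simp only [eval_add, eval_mul, eval_pow, eval_sub, eval_one, eval_C, eval_X]
    rw [mul_pow]
    rw [Real.sq_sqrt (by linarith), Real.sq_sqrt (by linarith)]
    ring

lemma goodPair_XsqAdd {t : ℝ} (ht : 0 ≤ t) : GoodPair 1 (X^2 + C t) := by
  refine ⟨C (Real.sqrt (1+t)) * X, C (Real.sqrt t), ?_, ?_, ?_, ?_, ?_⟩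
  · exact le_trans (degree_mul_le _ _)
      (by simpa using add_le_add (degree_C_le : (C (Real.sqrt (1+t)) : Polynomial ℝ).degree ≤ 0) (degree_X_le : (X : Polynomial ℝ).degree ≤ 1))
  · simpa using add_le_add_left (degree_C_le : (C (Real.sqrt t) : Polynomial ℝ).degree ≤ 0) 1
  · exact hp_congr (by omega) (hp_mul (hp_C _) hp_X)
  · exact hp_congr (by omega) (hp_C _)
  · apply Polynomial.funext; intro x
    simp only [eval_add, eval_mul, eval_pow, eval_sub, eval_one, eval_C, eval_X]
    rw [mul_pow]
    rw [Real.sq_sqrt (by linarith), Real.sq_sqrt (by linarith)]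
    ring

lemma goodPair_sqfactor (u : ℝ) : GoodPair 2 ((X^2 - C u)^2) := by
  refine ⟨X^2 - C u, 0, ?_, by simp, ?_, hp_zero, by ring⟩
  · apply le_trans (degree_sub_le _ _)
    apply max_le (by simpa using degree_X_pow_le 2) (le_trans degree_C_le (by norm_num))
  · exact hp_sub (hp_congr rfl hp_X_sq) (hp_congr (by omega) (hp_C _))

lemma goodPair_quartic {p q : ℝ} (hpq : p^2 < 4*q) (h1pq : 0 < 1 + p + q) :
    GoodPair 2 (X^4 + C p * X^2 + C q) := by
  have hq : 0 < q := by nlinarith [sq_nonneg p]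
  set β := Real.sqrt (1+p+q) with hβdef
  set s := Real.sqrt (q*(1+p+q)) with hsdef
  set t := p + 2*q + 2*s with htdef
  have hβ : β^2 = 1+p+q := Real.sq_sqrt (by linarith)
  have hs2 : s^2 = q*(1+p+q) := Real.sq_sqrt (by positivity)
  have hs0 : 0 ≤ s := Real.sqrt_nonneg _
  have hβ0 : 0 ≤ β := Real.sqrt_nonneg _
  have ht0 : 0 ≤ t := by nlinarith
  have htp2 : 0 ≤ t + p + 2 := by nlinarith
  set α := Real.sqrt (1+t) with hαdef
  set γ := Real.sqrt t with hγdef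
  have hα : α^2 = 1+t := Real.sq_sqrt (by linarith)
  have hγ : γ^2 = t := Real.sq_sqrt ht0
  have hα0 : 0 ≤ α := Real.sqrt_nonneg _
  have keysq : (2*α*β)^2 = (t+p+2)^2 := by
    have : (2*α*β)^2 = 4*(1+t)*β^2 := by rw [mul_pow, mul_pow, hα]; ring
    rw [this]
    linear_combination (4*(1+t))*hβ - 4*hs2
  have key : 2*α*β = t+p+2 := by
    have h1 : 2*α*β = Real.sqrt ((2*α*β)^2) := (Real.sqrt_sq (by positivity)).symm
    rw [h1, keysq, Real.sqrt_sq htp2]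
  refine ⟨C α * (X^2 - 1) + C β, C γ * X, ?_, ?_, ?_, ?_, ?_⟩
  · apply le_trans (degree_add_le _ _)
    apply max_le
    · apply le_trans (degree_mul_le _ _)
      have h2 : (X^2 - 1 : Polynomial ℝ).degree ≤ 2 := by compute_degree
      simpa using add_le_add (degree_C_le : (C α : Polynomial ℝ).degree ≤ 0) h2
    · exact le_trans degree_C_le (by norm_num)
  · have : (C γ * X : Polynomial ℝ).degree ≤ 1 := le_trans (degree_mul_le _ _) (by simpa using add_le_add (degree_C_le : (C γ : Polynomial ℝ).degree ≤ 0) (degree_X_le : (X : Polynomial ℝ).degree ≤ 1))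
    calc (C γ * X : Polynomial ℝ).degree + 1 ≤ 1 + 1 := add_le_add_left this 1
      _ = ((2:ℕ) : WithBot ℕ) := rfl
  · apply hp_add
    · exact hp_congr (by omega) (hp_mul (hp_C _) (hp_sub (hp_congr rfl hp_X_sq) (hp_congr (by omega) hp_one)))
    · exact hp_congr (by omega) (hp_C _)
  · exact hp_congr (by omega) (hp_mul (hp_C _) hp_X)
  · apply Polynomial.funext; intro x
    simp only [eval_add, eval_mul, eval_pow, eval_sub, eval_one, eval_C, eval_X]
    linear_combination ((x^2-1)^2)*hα + (x^2-1)*key + hβ + ((1-x^2)*x^2)*hγ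

open Set Filter Topology in
lemma nonneg_extend (T : Polynomial ℝ) (u : ℝ)
    (h : ∀ y ∈ Set.Icc (0:ℝ) 1, y ≠ u → 0 ≤ T.eval y) :
    ∀ y ∈ Set.Icc (0:ℝ) 1, 0 ≤ T.eval y := by
  intro y hy
  by_cases hyu : y = u
  · subst hyu
    obtain ⟨hy0, hy1⟩ := hy
    rcases lt_or_eq_of_le hy1 with hlt | heq
    · -- approach from the right
      have htd : Tendsto (fun z => T.eval z) (𝓝[>] y) (𝓝 (T.eval y)) :=
        (T.continuous.tendsto y).mono_left nhdsWithin_le_nhds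
      refine ge_of_tendsto htd ?_
      filter_upwards [Ioc_mem_nhdsGT_of_mem (Set.mem_Ico.mpr ⟨le_refl y, hlt⟩)] with z hz
      exact h z ⟨le_of_lt (lt_of_le_of_lt hy0 hz.1), hz.2⟩ (ne_of_gt hz.1)
    · -- y = 1, approach from the left
      have h0 : (0:ℝ) < y := by rw [heq]; norm_num
      have htd : Tendsto (fun z => T.eval z) (𝓝[<] y) (𝓝 (T.eval y)) :=
        (T.continuous.tendsto y).mono_left nhdsWithin_le_nhds
      refine ge_of_tendsto htd ?_
      filter_upwards [Ico_mem_nhdsLT_of_mem (Set.mem_Ioc.mpr ⟨h0, le_refl y⟩)] with z hz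
      exact h z ⟨hz.1, le_trans (le_of_lt hz.2) hy1⟩ (ne_of_lt hz.2)
  · exact h y hy hyu

lemma goodPair_C {c : ℝ} (hc : 0 ≤ c) : GoodPair 0 (C c) := by
  refine ⟨C (Real.sqrt c), 0, degree_C_le, by simp, hp_C _, hp_zero, ?_⟩
  apply Polynomial.funext; intro x
  simp only [eval_add, eval_mul, eval_pow, eval_sub, eval_one, eval_C, eval_X]
  rw [Real.sq_sqrt hc]; simp

open Set Filter Topology in
lemma goodPair_of_nonneg (N : ℕ) : ∀ S : Polynomial ℝ, S.natDegree ≤ N →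
    (∀ y ∈ Set.Icc (0:ℝ) 1, 0 ≤ S.eval y) → GoodPair N (S.comp (X^2)) := by
  induction N using Nat.strong_induction_on with
  | _ N ih =>
  intro S hdeg hnn
  by_cases hS0 : S = 0
  · simpa [hS0] using goodPair_zero N
  by_cases hSC : S.natDegree = 0
  · obtain ⟨c, hc⟩ := natDegree_eq_zero.mp hSC
    have hc0 : 0 ≤ c := by
      have := hnn (1/2) (by norm_num)
      rw [← hc] at this; simpa using this
    rw [← hc, C_comp]
    exact goodPair_le (goodPair_C hc0) (Nat.zero_le N)
  have hN1 : 1 ≤ N := le_trans (by omega) hdeg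
  by_cases hroot : ∃ u : ℝ, S.eval u = 0
  · obtain ⟨u, hu⟩ := hroot
    obtain ⟨T, hT⟩ := dvd_iff_isRoot.mpr (show S.IsRoot u from hu)
    have hT0 : T ≠ 0 := fun h => hS0 (by simp [hT, h])
    have hdegT : T.natDegree = S.natDegree - 1 := by
      rw [hT, natDegree_mul (X_sub_C_ne_zero u) hT0, natDegree_X_sub_C]; omega
    have hSy : ∀ y : ℝ, S.eval y = (y - u) * T.eval y := by
      intro y; rw [hT]; simp
    rcases le_or_gt 1 u with hu1 | hu1
    · -- case u ≥ 1 : factor (C u - X)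
      have hTnn : ∀ y ∈ Set.Icc (0:ℝ) 1, 0 ≤ (-T).eval y := by
        apply nonneg_extend _ u
        intro y hy hyu
        have h1 := hnn y hy
        rw [hSy y] at h1
        have hyu' : y - u < 0 := by
          rcases lt_or_eq_of_le (le_trans hy.2 hu1) with h | h
          · linarith
          · exact absurd h hyu
        rw [eval_neg]
        nlinarith
      have ihT := ih (N-1) (by omega) (-T) (by rw [natDegree_neg]; omega) hTnn
      have hmul := goodPair_mul (goodPair_uSubXsq hu1) ihT
      have heq : (C u - X^2) * ((-T).comp (X^2)) = S.comp (X^2) := by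
        rw [hT, mul_comp, sub_comp, X_comp, C_comp, neg_comp]; ring
      rw [heq] at hmul
      have hN : 1 + (N - 1) = N := by omega
      rwa [hN] at hmul
    rcases le_or_gt u 0 with hu0 | hu0
    · -- case u ≤ 0 : factor (X² - C u) = X² + C (-u)
      have hTnn : ∀ y ∈ Set.Icc (0:ℝ) 1, 0 ≤ T.eval y := by
        apply nonneg_extend _ u
        intro y hy hyu
        have h1 := hnn y hy
        rw [hSy y] at h1
        have hyu' : 0 < y - u := by
          rcases lt_or_eq_of_le (le_trans hu0 hy.1) with h | h
          · linarith
          · exact absurd h.symm hyu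
        nlinarith
      have ihT := ih (N-1) (by omega) T (by omega) hTnn
      have hmul := goodPair_mul (goodPair_XsqAdd (show (0:ℝ) ≤ -u by linarith)) ihT
      have heq : (X^2 + C (-u)) * (T.comp (X^2)) = S.comp (X^2) := by
        rw [hT, mul_comp, sub_comp, X_comp, C_comp, map_neg]; ring
      rw [heq] at hmul
      have hN : 1 + (N - 1) = N := by omega
      rwa [hN] at hmul
    · -- case 0 < u < 1 : double root
      have hTu : T.eval u = 0 := by
        by_contra hTu
        rcases lt_or_gt_of_ne hTu with hneg | hpos
        · -- T u < 0 : S < 0 just right of u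
          have htd : Tendsto (fun z => T.eval z) (𝓝[>] u) (𝓝 (T.eval u)) :=
            (T.continuous.tendsto u).mono_left nhdsWithin_le_nhds
          have hev : ∀ᶠ z in 𝓝[>] u, T.eval z < 0 := htd.eventually (eventually_lt_nhds hneg)
          have hmem : Ioo u 1 ∈ 𝓝[>] u := Ioo_mem_nhdsGT_of_mem (Set.mem_Ico.mpr ⟨le_refl u, hu1⟩)
          obtain ⟨z, hz1, hz2⟩ := (hev.and (eventually_of_mem hmem (fun z hz => hz))).exists
          have := hnn z ⟨by linarith [hz2.1], le_of_lt hz2.2⟩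
          rw [hSy z] at this
          nlinarith [hz2.1]
        · -- T u > 0 : S < 0 just left of u
          have htd : Tendsto (fun z => T.eval z) (𝓝[<] u) (𝓝 (T.eval u)) :=
            (T.continuous.tendsto u).mono_left nhdsWithin_le_nhds
          have hev : ∀ᶠ z in 𝓝[<] u, 0 < T.eval z := htd.eventually (eventually_gt_nhds hpos)
          have hmem : Ioo 0 u ∈ 𝓝[<] u := Ioo_mem_nhdsLT_of_mem (Set.mem_Ioc.mpr ⟨hu0, le_refl u⟩)
          obtain ⟨z, hz1, hz2⟩ := (hev.and (eventually_of_mem hmem (fun z hz => hz))).exists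
          have := hnn z ⟨le_of_lt hz2.1, by linarith [hz2.2]⟩
          rw [hSy z] at this
          nlinarith [hz2.2]
      obtain ⟨T₂, hT₂⟩ := dvd_iff_isRoot.mpr (show T.IsRoot u from hTu)
      have hT₂0 : T₂ ≠ 0 := fun h => hT0 (by simp [hT₂, h])
      have hS2 : S = (X - C u)^2 * T₂ := by rw [hT, hT₂]; ring
      have hdegT₂ : T₂.natDegree = S.natDegree - 2 := by
        rw [hS2, natDegree_mul (pow_ne_zero 2 (X_sub_C_ne_zero u)) hT₂0,
          natDegree_pow, natDegree_X_sub_C]; omega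
      have hdegS2 : 2 ≤ S.natDegree := by
        rw [hS2, natDegree_mul (pow_ne_zero 2 (X_sub_C_ne_zero u)) hT₂0,
          natDegree_pow, natDegree_X_sub_C]; omega
      have hSy2 : ∀ y : ℝ, S.eval y = (y - u)^2 * T₂.eval y := by
        intro y; rw [hS2]; simp
      have hTnn : ∀ y ∈ Set.Icc (0:ℝ) 1, 0 ≤ T₂.eval y := by
        apply nonneg_extend _ u
        intro y hy hyu
        have h1 := hnn y hy
        rw [hSy2 y] at h1
        have : (y - u)^2 > 0 := sq_pos_of_ne_zero (sub_ne_zero.mpr hyu)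
        nlinarith
      have ihT := ih (N-2) (by omega) T₂ (by omega) hTnn
      have hmul := goodPair_mul (goodPair_sqfactor u) ihT
      have heq : ((X^2 - C u)^2) * (T₂.comp (X^2)) = S.comp (X^2) := by
        rw [hS2, mul_comp, pow_comp, sub_comp, X_comp, C_comp]
      rw [heq] at hmul
      have hN : 2 + (N - 2) = N := by omega
      rwa [hN] at hmul
  · -- no real root: extract complex conjugate pair
    push_neg at hroot
    have hdegpos : 0 < (S.map (algebraMap ℝ ℂ)).degree := by
      rw [degree_map_eq_of_injective (algebraMap ℝ ℂ).injective]
      exact natDegree_pos_iff_degree_pos.mp (by omega)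
    obtain ⟨z, hz⟩ := Complex.exists_root hdegpos
    have haev : aeval z S = 0 := by
      rw [aeval_def, ← eval_map]; exact hz
    have him : z.im ≠ 0 := by
      intro h0
      have hzre : z = ((z.re : ℝ) : ℂ) := Complex.ext rfl (by simp [h0])
      rw [hzre] at haev
      have : ((S.eval z.re : ℝ) : ℂ) = 0 := by
        rw [← haev, aeval_def]; exact_mod_cast (eval₂_at_apply (algebraMap ℝ ℂ) z.re (p := S)).symm
      exact hroot z.re (by exact_mod_cast this)
    obtain ⟨T, hT⟩ := S.quadratic_dvd_of_aeval_eq_zero_im_ne_zero haev him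
    set quad : Polynomial ℝ := X ^ 2 - C (2 * z.re) * X + C (‖z‖ ^ 2) with hquad
    have hnormsq : ‖z‖^2 = z.re^2 + z.im^2 := by
      rw [Complex.sq_norm, Complex.normSq_apply]; ring
    have hquadpos : ∀ y : ℝ, 0 < quad.eval y := by
      intro y
      have : quad.eval y = (y - z.re)^2 + z.im^2 := by
        simp only [hquad, eval_add, eval_sub, eval_mul, eval_pow, eval_C, eval_X, hnormsq]; ring
      rw [this]
      have : z.im^2 > 0 := by positivity
      nlinarith [sq_nonneg (y - z.re)]
    have hquad0 : quad ≠ 0 := fun h => by simpa [h] using hquadpos 0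
    have hdegquad : quad.natDegree = 2 := by
      rw [hquad]; compute_degree!
    have hT0 : T ≠ 0 := fun h => hS0 (by simp [hT, h])
    have hdegT : T.natDegree = S.natDegree - 2 := by
      rw [hT, natDegree_mul hquad0 hT0, hdegquad]; omega
    have hdegS2 : 2 ≤ S.natDegree := by
      rw [hT, natDegree_mul hquad0 hT0, hdegquad]; omega
    have hTnn : ∀ y ∈ Set.Icc (0:ℝ) 1, 0 ≤ T.eval y := by
      intro y hy
      have h1 := hnn y hy
      rw [hT, eval_mul] at h1
      nlinarith [hquadpos y]
    have ihT := ih (N-2) (by omega) T (by omega) hTnn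
    have hq4 : GoodPair 2 (X^4 + C (-(2*z.re)) * X^2 + C (‖z‖^2)) := by
      apply goodPair_quartic
      · rw [hnormsq]; nlinarith [sq_pos_of_ne_zero him]
      · rw [hnormsq]; nlinarith [sq_pos_of_ne_zero him, sq_nonneg (1 - z.re)]
    have hmul := goodPair_mul hq4 ihT
    have heq : (X^4 + C (-(2*z.re)) * X^2 + C (‖z‖^2)) * (T.comp (X^2)) = S.comp (X^2) := by
      rw [hT, mul_comp, add_comp, sub_comp, mul_comp, pow_comp, X_comp, C_comp, C_comp, map_neg]
      ring
    rw [heq] at hmul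
    have hN : 2 + (N - 2) = N := by omega
    rwa [hN] at hmul

lemma even_poly_comp (Rp : Polynomial ℝ) (hR : HasParity 0 Rp) (n : ℕ)
    (hdeg : Rp.natDegree ≤ 2*n) :
    ∃ S : Polynomial ℝ, S.natDegree ≤ n ∧ S.comp (X^2) = Rp := by
  refine ⟨∑ k ∈ Finset.range (n+1), C (Rp.coeff (2*k)) * X^k, ?_, ?_⟩
  · apply natDegree_le_iff_degree_le.mpr
    apply le_trans (degree_sum_le _ _)
    apply Finset.sup_le
    intro k hk
    apply le_trans (degree_mul_le _ _)
    apply le_trans (add_le_add (degree_C_le) (degree_X_pow_le k))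
    rw [Finset.mem_range] at hk
    simpa using (by omega : k ≤ n)
  · have hcomp : (∑ k ∈ Finset.range (n+1), C (Rp.coeff (2*k)) * X^k).comp (X^2)
        = ∑ k ∈ Finset.range (n+1), C (Rp.coeff (2*k)) * (X : Polynomial ℝ)^(2*k) := by
      rw [sum_comp]
      apply Finset.sum_congr rfl
      intro k _
      rw [mul_comp, C_comp, pow_comp, X_comp, ← pow_mul]
    rw [hcomp]
    ext m
    rw [finset_sum_coeff]
    simp only [coeff_C_mul, coeff_X_pow]
    rcases Nat.even_or_odd m with hev | hodd
    · obtain ⟨j, hj⟩ := hev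
      rcases le_or_gt j n with hjn | hjn
      · rw [Finset.sum_eq_single j]
        · rw [if_pos (by omega), mul_one, hj]
          congr 1; omega
        · intro b hb hbj
          rw [Finset.mem_range] at hb
          rw [if_neg (by omega), mul_zero]
        · intro hj'
          exact absurd (Finset.mem_range.mpr (by omega)) hj'
      · have hRm : Rp.coeff m = 0 := by
          apply coeff_eq_zero_of_natDegree_lt; omega
        rw [hRm]
        apply Finset.sum_eq_zero
        intro b hb
        rw [Finset.mem_range] at hb
        rw [if_neg (by omega), mul_zero]
    · obtain ⟨j, hj⟩ := hodd
      have hRm : Rp.coeff m = 0 := hR m (by omega)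
      rw [hRm]
      apply Finset.sum_eq_zero
      intro b _
      rw [if_neg (by omega), mul_zero]

lemma goodPair_main (d : ℕ) (Rp : Polynomial ℝ) (hpar : HasParity 0 Rp)
    (hdeg : Rp.natDegree ≤ 2*d) (hnn : ∀ x ∈ Set.Icc (-1:ℝ) 1, 0 ≤ Rp.eval x) :
    GoodPair d Rp := by
  obtain ⟨S, hSdeg, hScomp⟩ := even_poly_comp Rp hpar d hdeg
  have hSnn : ∀ y ∈ Set.Icc (0:ℝ) 1, 0 ≤ S.eval y := by
    intro y hy
    have h1 : Real.sqrt y ∈ Set.Icc (-1:ℝ) 1 :=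
      ⟨le_trans (by norm_num) (Real.sqrt_nonneg y), Real.sqrt_le_one.mpr hy.2⟩
    have h2 := hnn _ h1
    rw [← hScomp, eval_comp, eval_pow, eval_X, Real.sq_sqrt hy.1] at h2
    exact h2
  have := goodPair_of_nonneg d S hSdeg hSnn
  rwa [hScomp] at this

lemma re_eval (P : Polynomial ℂ) (Pt : Polynomial ℝ)
    (h : ∀ k, (P.coeff k).re = Pt.coeff k) (x : ℝ) :
    (P.eval (x:ℂ)).re = Pt.eval x := by
  set N := max P.natDegree Pt.natDegree + 1 with hN
  rw [Polynomial.eval_eq_sum_range' (show P.natDegree < N by omega),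
    Polynomial.eval_eq_sum_range' (show Pt.natDegree < N by omega), Complex.re_sum]
  apply Finset.sum_congr rfl
  intro i _
  rw [← h i]
  simp [Complex.mul_re, ← Complex.ofReal_pow]

lemma withbot_pred {B : Polynomial ℝ} {d : ℕ} (hd : 1 ≤ d) (h : B.degree + 1 ≤ (d : WithBot ℕ)) :
    B.degree ≤ ((d - 1 : ℕ) : WithBot ℕ) := by
  by_cases hB : B = 0
  · simp [hB]
  · rw [degree_eq_natDegree hB] at h ⊢
    have hm : B.natDegree + 1 ≤ d := by exact_mod_cast h
    exact_mod_cast (show B.natDegree ≤ d - 1 by omega)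

lemma eval_map_real (Pt : Polynomial ℝ) (x : ℝ) :
    (Pt.map (algebraMap ℝ ℂ)).eval (x : ℂ) = ((Pt.eval x : ℝ) : ℂ) := by
  rw [eval_map]
  exact_mod_cast eval₂_at_apply (algebraMap ℝ ℂ) x (p := Pt)


/-- Characterization of achievable real parts: a pair of real
polynomials `(P̃, Q̃)` arises coefficientwise as the real parts of a valid QSP
pair `(P, Q)` iff it satisfies the degree and parity constraints and
`P̃(x)² + (1-x²)·Q̃(x)² ≤ 1` on `[-1,1]`. -/
theorem qsp_real_part_characterization (d : ℕ) (hd : 1 ≤ d)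
    (Pt Qt : Polynomial ℝ) :
    (∃ P Q : Polynomial ℂ,
        P.degree ≤ (d : WithBot ℕ) ∧ Q.degree ≤ ((d - 1 : ℕ) : WithBot ℕ) ∧
        HasParity d P ∧ HasParity (d - 1) Q ∧
        (∀ x ∈ Set.Icc (-1 : ℝ) 1,
          Complex.normSq (P.eval (x : ℂ)) +
            (1 - x ^ 2) * Complex.normSq (Q.eval (x : ℂ)) = 1) ∧
        (∀ k, (P.coeff k).re = Pt.coeff k) ∧
        (∀ k, (Q.coeff k).re = Qt.coeff k)) ↔
      (Pt.degree ≤ (d : WithBot ℕ) ∧ Qt.degree ≤ ((d - 1 : ℕ) : WithBot ℕ) ∧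
        HasParity d Pt ∧ HasParity (d - 1) Qt ∧
        ∀ x ∈ Set.Icc (-1 : ℝ) 1,
          (Pt.eval x) ^ 2 + (1 - x ^ 2) * (Qt.eval x) ^ 2 ≤ 1) := by
  constructor
  · rintro ⟨P, Q, hPdeg, hQdeg, hPpar, hQpar, hnorm, hPre, hQre⟩
    refine ⟨?_, ?_, ?_, ?_, ?_⟩
    · rw [degree_le_iff_coeff_zero] at hPdeg ⊢
      intro m hm
      rw [← hPre m, hPdeg m hm, Complex.zero_re]
    · rw [degree_le_iff_coeff_zero] at hQdeg ⊢
      intro m hm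
      rw [← hQre m, hQdeg m hm, Complex.zero_re]
    · intro k hk; rw [← hPre k, hPpar k hk, Complex.zero_re]
    · intro k hk; rw [← hQre k, hQpar k hk, Complex.zero_re]
    · intro x hx
      have h1 := hnorm x hx
      have hx2 : (0:ℝ) ≤ 1 - x^2 := by
        obtain ⟨hx1, hx2⟩ := hx; nlinarith
      have hP2 : (Pt.eval x)^2 ≤ Complex.normSq (P.eval (x:ℂ)) := by
        rw [← re_eval P Pt hPre x, Complex.normSq_apply]
        nlinarith [sq_nonneg (P.eval (x:ℂ)).im]
      have hQ2 : (Qt.eval x)^2 ≤ Complex.normSq (Q.eval (x:ℂ)) := by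
        rw [← re_eval Q Qt hQre x, Complex.normSq_apply]
        nlinarith [sq_nonneg (Q.eval (x:ℂ)).im]
      nlinarith [mul_le_mul_of_nonneg_left hQ2 hx2]
  · rintro ⟨hPdeg, hQdeg, hPpar, hQpar, hineq⟩
    set Rp : Polynomial ℝ := 1 - Pt^2 - (1 - X^2) * Qt^2 with hRp
    have hPt2 : Pt^2 = Pt * Pt := sq Pt
    have hQt2 : Qt^2 = Qt * Qt := sq Qt
    have hparR : HasParity 0 Rp := by
      apply hp_sub
      · apply hp_sub hp_one
        rw [hPt2]
        exact hp_congr (by omega) (hp_mul hPpar hPpar)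
      · rw [hQt2]
        exact hp_congr (by omega) (hp_mul hp_one_sub_X_sq (hp_mul hQpar hQpar))
    have hPtnat : Pt.natDegree ≤ d := natDegree_le_iff_degree_le.mpr hPdeg
    have hQtnat : Qt.natDegree ≤ d - 1 := natDegree_le_iff_degree_le.mpr hQdeg
    have hdegR : Rp.natDegree ≤ 2 * d := by
      apply le_trans (natDegree_sub_le _ _)
      apply max_le
      · apply le_trans (natDegree_sub_le _ _)
        apply max_le (by simp)
        rw [natDegree_pow]; omega
      · apply le_trans (natDegree_mul_le)
        have h1 : (1 - X^2 : Polynomial ℝ).natDegree ≤ 2 :=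
          natDegree_le_iff_degree_le.mpr (by compute_degree; norm_cast)
        rw [natDegree_pow]; omega
    have hnnR : ∀ x ∈ Set.Icc (-1:ℝ) 1, 0 ≤ Rp.eval x := by
      intro x hx
      have := hineq x hx
      simp only [hRp, eval_sub, eval_one, eval_pow, eval_mul, eval_X]
      linarith
    obtain ⟨A, B, hAdeg, hBdeg, hApar, hBpar, hval⟩ := goodPair_main d Rp hparR hdegR hnnR
    refine ⟨Pt.map (algebraMap ℝ ℂ) + C Complex.I * A.map (algebraMap ℝ ℂ),
            Qt.map (algebraMap ℝ ℂ) + C Complex.I * B.map (algebraMap ℝ ℂ),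
            ?_, ?_, ?_, ?_, ?_, ?_, ?_⟩
    · apply le_trans (degree_add_le _ _)
      apply max_le (le_trans (degree_map_le) hPdeg)
      apply le_trans (degree_mul_le _ _)
      simpa using hAdeg
    · apply le_trans (degree_add_le _ _)
      apply max_le (le_trans (degree_map_le) hQdeg)
      apply le_trans (degree_mul_le _ _)
      simpa using withbot_pred hd hBdeg
    · intro k hk
      rw [coeff_add, coeff_map, coeff_C_mul, coeff_map, hPpar k hk,
        hApar k (by omega)]
      simp
    · intro k hk
      rw [coeff_add, coeff_map, coeff_C_mul, coeff_map, hQpar k hk,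
        hBpar k (by omega)]
      simp
    · intro x hx
      have hvalx : (A.eval x)^2 + (1 - x^2) * (B.eval x)^2 = Rp.eval x := by
        have := congrArg (Polynomial.eval x) hval
        simpa using this
      have hRx : Rp.eval x = 1 - (Pt.eval x)^2 - (1 - x^2) * (Qt.eval x)^2 := by
        simp [hRp]
      have hevP : (Pt.map (algebraMap ℝ ℂ) + C Complex.I * A.map (algebraMap ℝ ℂ)).eval (x:ℂ)
          = ((Pt.eval x : ℝ) : ℂ) + Complex.I * ((A.eval x : ℝ) : ℂ) := by
        rw [eval_add, eval_mul, eval_C, eval_map_real, eval_map_real]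
      have hevQ : (Qt.map (algebraMap ℝ ℂ) + C Complex.I * B.map (algebraMap ℝ ℂ)).eval (x:ℂ)
          = ((Qt.eval x : ℝ) : ℂ) + Complex.I * ((B.eval x : ℝ) : ℂ) := by
        rw [eval_add, eval_mul, eval_C, eval_map_real, eval_map_real]
      rw [hevP, hevQ]
      have hns : ∀ a b : ℝ, Complex.normSq (((a:ℝ):ℂ) + Complex.I * ((b:ℝ):ℂ)) = a^2 + b^2 := by
        intro a b
        simp [Complex.normSq_apply]
        ring
      rw [hns, hns]
      rw [hRx] at hvalx
      ring_nf
      ring_nf at hvalx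
      linarith
    · intro k
      rw [coeff_add, coeff_map, coeff_C_mul, coeff_map]
      simp
    · intro k
      rw [coeff_add, coeff_map, coeff_C_mul, coeff_map]
      simp
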